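/- If S is an ε-synchronization string, then for any indices i < j, the prefixes S[1,i] and S[1,j] satisfy RSD(S[1,i], S[1,j]) > 1 − ε. -/

import Mathlib

open scoped Classical

variable {α : Type*}

def EditStep (x y : List α) : Prop :=
  (∃ (a : α) (l r : List α), x = l ++ r ∧ y = l ++ a :: r) ∨
  (∃ (a : α) (l r : List α), x = l ++ a :: r ∧ y = l ++ r)

def EditChain : ℕ → List α → List α → Prop
  | 0, x, y => x = y
  | n+1, x, y => ∃ z, EditStep x z ∧ EditChain n z y

/-- Edit distance: minimum number of single-symbol insertions and deletions
transforming `x` into `y`. -/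
noncomputable def ED (x y : List α) : ℕ := sInf {n | EditChain n x y}

/-- Length of a longest common subsequence. -/
noncomputable def LCS (x y : List α) : ℕ :=
  sSup {n | ∃ z : List α, z.length = n ∧ z.Sublist x ∧ z.Sublist y}

/-- The length-`k` suffix of `S`, padded on the left with `none` (the symbol `⊥ ∉ Σ`)
if `k > |S|`. -/
def padSuffix (S : List α) (k : ℕ) : List (Option α) :=
  List.replicate (k - S.length) none ++ (S.map some).drop (S.length - k)

/-- Relative suffix distance. -/
noncomputable def RSD (S S' : List α) : ℝ :=
  ⨆ k : ℕ+, (ED (padSuffix S k) (padSuffix S' k) : ℝ) / (2 * ((k : ℕ) : ℝ))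

/-- The factor `S[i, j)` of `S` (1-based indices). -/
def factor (S : List α) (i j : ℕ) : List α := (S.drop (i - 1)).take (j - i)

/-- `S` is an ε-synchronization string. -/
def IsSyncString (ε : ℝ) (S : List α) : Prop :=
  ∀ i j k : ℕ, 1 ≤ i → i < j → j < k → k ≤ S.length + 1 →
    (1 - ε) * ((k : ℝ) - (i : ℝ)) < (ED (factor S i j) (factor S j k) : ℝ)

/-- Monotone matching between `S` and `S'` (1-based indices). -/
def IsMatching (S S' : List α) (M : List (ℕ × ℕ)) : Prop :=
  M.Chain' (fun p q => p.1 < q.1 ∧ p.2 < q.2) ∧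
  ∀ p ∈ M, 1 ≤ p.1 ∧ p.1 ≤ S.length ∧ 1 ≤ p.2 ∧ p.2 ≤ S'.length ∧
    S[p.1 - 1]? = S'[p.2 - 1]?

/-- `T` satisfies the ε-self-matching property. -/
def HasSelfMatchingProp (ε : ℝ) (T : List α) : Prop :=
  ∀ M : List (ℕ × ℕ), IsMatching T T M →
    ((M.filter (fun p => p.1 ≠ p.2)).length : ℝ) < ε * (T.length : ℝ)

/-- Index `k` of `S` is ε-bad (1-based). -/
def BadIndex (ε : ℝ) (S : List α) (k : ℕ) : Prop :=
  ∃ i j, 1 ≤ i ∧ i ≤ k ∧ k ≤ j ∧ j ≤ S.length ∧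
    ¬ HasSelfMatchingProp ε (factor S i (j + 1))

/-- Number of ε-bad indices of `S`. -/
noncomputable def badCount (ε : ℝ) (S : List α) : ℕ :=
  ((Finset.Icc 1 S.length).filter fun k => BadIndex ε S k).card

-- auxiliary lemmas
open scoped List

lemma editChain_trans {m n : ℕ} {x y z : List α} (h1 : EditChain m x y)
    (h2 : EditChain n y z) : EditChain (m + n) x z := by
  induction m generalizing x with
  | zero => rw [Nat.zero_add]; exact h1 ▸ h2
  | succ m ih =>
    obtain ⟨w, hs, hc⟩ := h1
    rw [Nat.succ_add]
    exact ⟨w, hs, ih hc⟩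

lemma EditStep.consLift {x y : List α} (a : α) (h : EditStep x y) :
    EditStep (a :: x) (a :: y) := by
  rcases h with ⟨b, l, r, rfl, rfl⟩ | ⟨b, l, r, rfl, rfl⟩
  · exact Or.inl ⟨b, a :: l, r, rfl, rfl⟩
  · exact Or.inr ⟨b, a :: l, r, rfl, rfl⟩

lemma editChain_cons {n : ℕ} {x y : List α} (a : α) (h : EditChain n x y) :
    EditChain n (a :: x) (a :: y) := by
  induction n generalizing x with
  | zero => exact congrArg (a :: ·) h
  | succ n ih =>
    obtain ⟨z, hs, hc⟩ := h
    exact ⟨a :: z, hs.consLift a, ih hc⟩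

lemma editChain_del {x z : List α} (h : z <+ x) :
    EditChain (x.length - z.length) x z := by
  induction h with
  | slnil => rfl
  | @cons l₁ l₂ a h ih =>
    have e : (a :: l₂).length - l₁.length = 1 + (l₂.length - l₁.length) := by
      have := h.length_le; simp; omega
    rw [e]
    exact editChain_trans (⟨l₂, Or.inr ⟨a, [], l₂, rfl, rfl⟩, rfl⟩ : EditChain 1 (a::l₂) l₂) ih
  | @cons_cons l₁ l₂ a h ih =>
    simpa [Nat.succ_sub_succ] using editChain_cons a ih

lemma editChain_ins {z y : List α} (h : z <+ y) :
    EditChain (y.length - z.length) z y := by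
  induction h with
  | slnil => rfl
  | @cons l₁ l₂ a h ih =>
    have e : (a :: l₂).length - l₁.length = (l₂.length - l₁.length) + 1 := by
      have := h.length_le; simp; omega
    rw [e]
    exact editChain_trans ih (⟨a :: l₂, Or.inl ⟨a, [], l₂, rfl, rfl⟩, rfl⟩ : EditChain 1 l₂ (a::l₂))
  | @cons_cons l₁ l₂ a h ih =>
    simpa [Nat.succ_sub_succ] using editChain_cons a ih

lemma editChain_exists (x y : List α) : ∃ n, EditChain n x y :=
  ⟨_, editChain_trans (editChain_del (List.nil_sublist x)) (editChain_ins (List.nil_sublist y))⟩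

lemma ED_le {n : ℕ} {x y : List α} (h : EditChain n x y) : ED x y ≤ n := Nat.sInf_le h

lemma editChain_ED (x y : List α) : EditChain (ED x y) x y :=
  Nat.sInf_mem (editChain_exists x y)

lemma ED_le_lengths (x y : List α) : ED x y ≤ x.length + y.length := by
  have := ED_le (editChain_trans (editChain_del (List.nil_sublist x))
    (editChain_ins (List.nil_sublist y)))
  simpa using this

lemma lcsSet_bdd (x y : List α) :
    BddAbove {n | ∃ z : List α, z.length = n ∧ z.Sublist x ∧ z.Sublist y} :=
  ⟨x.length, by rintro n ⟨z, rfl, hx, -⟩; exact hx.length_le⟩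

lemma lcs_witness (x y : List α) : ∃ z : List α, z.length = LCS x y ∧ z <+ x ∧ z <+ y :=
  Nat.sSup_mem (s := {n | ∃ z : List α, z.length = n ∧ z.Sublist x ∧ z.Sublist y})
    ⟨0, [], rfl, List.nil_sublist x, List.nil_sublist y⟩ (lcsSet_bdd x y)

lemma le_LCS {z x y : List α} (hx : z <+ x) (hy : z <+ y) : z.length ≤ LCS x y :=
  le_csSup (lcsSet_bdd x y) ⟨z, rfl, hx, hy⟩

lemma LCS_mono_left {x x' y : List α} (h : x <+ x') : LCS x y ≤ LCS x' y := by
  obtain ⟨z, hz, hx, hy⟩ := lcs_witness x y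
  exact hz ▸ le_LCS (hx.trans h) hy

lemma sublist_middle {w l r : List α} {a : α} (h : w <+ l ++ a :: r) :
    ∃ w', w' <+ w ∧ w' <+ l ++ r ∧ w.length ≤ w'.length + 1 := by
  rw [List.sublist_append_iff] at h
  obtain ⟨w1, w2, rfl, h1, h2⟩ := h
  rw [List.sublist_cons_iff] at h2
  rcases h2 with h2 | ⟨t, rfl, ht⟩
  · exact ⟨w1 ++ w2, List.Sublist.refl _, h1.append h2, by simp⟩
  · refine ⟨w1 ++ t, ?_, h1.append ht, by simp only [List.length_append, List.length_cons]; omega⟩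
    exact (List.sublist_cons_self a t).append_left w1

lemma length_le_editChain {n : ℕ} {x y : List α} (h : EditChain n x y) :
    x.length + y.length ≤ n + 2 * LCS x y := by
  induction n generalizing x with
  | zero =>
    have hxy : x = y := h
    subst hxy
    have := le_LCS (List.Sublist.refl x) (List.Sublist.refl x)
    omega
  | succ n ih =>
    obtain ⟨z, hs, hc⟩ := h
    have hz := ih hc
    rcases hs with ⟨a, l, r, rfl, rfl⟩ | ⟨a, l, r, rfl, rfl⟩
    · -- insertion: x = l ++ r, z = l ++ a :: r
      obtain ⟨w, hw, hwz, hwy⟩ := lcs_witness (l ++ a :: r) y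
      obtain ⟨w', hw'w, hw'z, hlen⟩ := sublist_middle hwz
      have h1 := le_LCS hw'z (hw'w.trans hwy)
      simp only [List.length_append, List.length_cons] at *
      omega
    · -- deletion: x = l ++ a :: r, z = l ++ r
      have hm : LCS (l ++ r) y ≤ LCS (l ++ a :: r) y :=
        LCS_mono_left ((List.sublist_cons_self a r).append_left l)
      obtain ⟨w, hw, hwx, hwy⟩ := lcs_witness (l ++ a :: r) y
      obtain ⟨w', hw'w, hw'z, hlen⟩ := sublist_middle hwx
      have h1 := le_LCS hw'z (hw'w.trans hwy)
      simp only [List.length_append, List.length_cons] at *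
      omega

lemma ED_add_two_LCS (x y : List α) : ED x y + 2 * LCS x y = x.length + y.length := by
  obtain ⟨z, hz, hx, hy⟩ := lcs_witness x y
  have h1 : ED x y ≤ (x.length - z.length) + (y.length - z.length) :=
    ED_le (editChain_trans (editChain_del hx) (editChain_ins hy))
  have h2 := length_le_editChain (editChain_ED x y)
  have h3 := hx.length_le
  have h4 := hy.length_le
  omega

lemma LCS_map_some (x y : List α) : LCS (x.map some) (y.map some) = LCS x y := by
  unfold LCS
  congr 1
  ext n
  constructor
  · rintro ⟨z, hz, hx, hy⟩
    obtain ⟨w, hw, rfl⟩ := List.sublist_map_iff.mp hx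
    obtain ⟨w', hw', he⟩ := List.sublist_map_iff.mp hy
    have : w = w' := List.map_injective_iff.mpr (Option.some_injective α) he
    exact ⟨w, by simpa using hz, hw, this ▸ hw'⟩
  · rintro ⟨z, hz, hx, hy⟩
    exact ⟨z.map some, by simpa using hz, hx.map _, hy.map _⟩

lemma LCS_pad (m : ℕ) (x : List (Option α)) (y : List α) :
    LCS (List.replicate m (none : Option α) ++ x) (y.map some) = LCS x (y.map some) := by
  unfold LCS
  congr 1
  ext n
  constructor
  · rintro ⟨z, hz, hx, hy⟩
    refine ⟨z, hz, ?_, hy⟩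
    refine List.Sublist.of_sublist_append_right (fun a ha hb => ?_) hx
    obtain ⟨w, -, rfl⟩ := List.sublist_map_iff.mp hy
    rw [List.eq_of_mem_replicate hb] at ha
    simp at ha
  · rintro ⟨z, hz, hx, hy⟩
    exact ⟨z, hz, hx.trans (List.sublist_append_right _ _), hy⟩

lemma ED_map_some (x y : List α) : ED (x.map some) (y.map some) = ED x y := by
  have h1 := ED_add_two_LCS (x.map some) (y.map some)
  have h2 := ED_add_two_LCS x y
  rw [LCS_map_some] at h1
  simp only [List.length_map] at h1
  omega

lemma ED_pad_ge (m : ℕ) (x y : List α) :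
    m + ED x y ≤ ED (List.replicate m (none : Option α) ++ x.map some) (y.map some) := by
  have h1 := length_le_editChain
    (editChain_ED (List.replicate m (none : Option α) ++ x.map some) (y.map some))
  rw [LCS_pad, LCS_map_some] at h1
  have h2 := ED_add_two_LCS x y
  simp only [List.length_append, List.length_replicate, List.length_map] at h1
  omega

lemma padSuffix_length (S : List α) (k : ℕ) : (padSuffix S k).length = k := by
  simp [padSuffix]
  omega

lemma le_RSD (S S' : List α) (k : ℕ+) :
    (ED (padSuffix S k) (padSuffix S' k) : ℝ) / (2 * ((k : ℕ) : ℝ)) ≤ RSD S S' := by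
  refine le_ciSup (f := fun k : ℕ+ =>
    (ED (padSuffix S k) (padSuffix S' k) : ℝ) / (2 * ((k : ℕ) : ℝ))) ⟨1, ?_⟩ k
  rintro x ⟨k, rfl⟩
  have hk : (0 : ℝ) < 2 * ((k : ℕ) : ℝ) := by
    have : (0 : ℕ) < (k : ℕ) := k.pos
    positivity
  rw [div_le_one hk]
  have h := ED_le_lengths (padSuffix S k) (padSuffix S' k)
  rw [padSuffix_length, padSuffix_length] at h
  have : (ED (padSuffix S ↑k) (padSuffix S' ↑k) : ℝ) ≤ ((k : ℕ) : ℝ) + ((k : ℕ) : ℝ) := by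
    exact_mod_cast h
  linarith

lemma factor_eq (S : List α) (i j : ℕ) : factor S (i+1) (j+1) = (S.drop i).take (j - i) := by
  simp [factor]

theorem sync_prefixes_rsd (ε : ℝ) (S : List α) (h : IsSyncString ε S) :
    ∀ i j : ℕ, 1 ≤ i → i < j → j ≤ S.length →
      1 - ε < RSD (S.take i) (S.take j) := by
  intro i j hi hij hjS
  have hlen2 : 2 ≤ S.length := by omega
  have hε : 0 ≤ ε := by
    by_contra hneg
    push_neg at hneg
    have h123 := h 1 2 3 le_rfl (by norm_num) (by norm_num) (by omega)
    have l1 : (factor S 1 2).length ≤ 1 := by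
      simp only [factor, List.length_take]; omega
    have l2 : (factor S 2 3).length ≤ 1 := by
      simp only [factor, List.length_take]; omega
    have hED : ED (factor S 1 2) (factor S 2 3) ≤ 2 := by
      have := ED_le_lengths (factor S 1 2) (factor S 2 3); omega
    have hED' : (ED (factor S 1 2) (factor S 2 3) : ℝ) ≤ 2 := by exact_mod_cast hED
    norm_num at h123
    linarith
  set k : ℕ := j - i with hk
  have hkpos : 0 < k := by omega
  have hQlen : (S.take j).length = j := by rw [List.length_take]; omega
  have hPlen : (S.take i).length = i := by rw [List.length_take]; omega
  have hQ : padSuffix (S.take j) k = (factor S (i+1) (j+1)).map some := by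
    rw [padSuffix, hQlen, show k - j = 0 from by omega, show j - k = i from by omega,
      List.replicate_zero, List.nil_append, ← List.map_drop, List.drop_take, factor_eq]
  have key : (1 - ε) * (2 * (k : ℝ)) <
      (ED (padSuffix (S.take i) k) (padSuffix (S.take j) k) : ℝ) := by
    rcases le_or_gt k i with hki | hik
    · -- k ≤ i : apply sync property to S[i-k+1, i+1) and S[i+1, j+1)
      have hP : padSuffix (S.take i) k = (factor S (i-k+1) (i+1)).map some := by
        rw [padSuffix, hPlen, show k - i = 0 from by omega, List.replicate_zero,
          List.nil_append, ← List.map_drop, List.drop_take]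
        have e : factor S (i-k+1) (i+1) = (S.drop (i-k)).take (i - (i-k)) := by
          unfold factor
          rw [show i - k + 1 - 1 = i - k from by omega,
            show i + 1 - (i - k + 1) = i - (i - k) from by omega]
        rw [e]
      rw [hP, hQ, ED_map_some]
      have hs := h (i-k+1) (i+1) (j+1) (by omega) (by omega) (by omega) (by omega)
      have ecast : ((j+1 : ℕ) : ℝ) - ((i-k+1 : ℕ) : ℝ) = 2 * (k : ℝ) := by
        have e : (i - k + 1) + 2 * k = j + 1 := by omega
        have := congrArg (fun n : ℕ => (n : ℝ)) e
        push_cast at this ⊢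
        linarith
      rw [ecast] at hs
      exact hs
    · -- k > i : padded case
      have hP2 : padSuffix (S.take i) k
          = List.replicate (k - i) none ++ (S.take i).map some := by
        rw [padSuffix, hPlen, show i - k = 0 from by omega, List.drop_zero]
      rw [hP2, hQ]
      have hpad := ED_pad_ge (k - i) (S.take i) (factor S (i+1) (j+1))
      have hpad' : ((k - i : ℕ) : ℝ) + (ED (S.take i) (factor S (i+1) (j+1)) : ℝ)
          ≤ (ED (List.replicate (k - i) (none : Option α) ++ (S.take i).map some)
              ((factor S (i+1) (j+1)).map some) : ℝ) := by exact_mod_cast hpad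
      have hs := h 1 (i+1) (j+1) le_rfl (by omega) (by omega) (by omega)
      have hfac1 : factor S 1 (i+1) = S.take i := by simp [factor]
      rw [hfac1] at hs
      push_cast at hs
      have hm : ((k - i : ℕ) : ℝ) = (j : ℝ) - 2 * (i : ℝ) := by
        have e : (k - i) + 2 * i = j := by omega
        have := congrArg (fun n : ℕ => (n : ℝ)) e
        push_cast at this
        linarith
      have hkc : ((k : ℕ) : ℝ) = (j : ℝ) - (i : ℝ) := by
        have e : k + i = j := by omega
        have := congrArg (fun n : ℕ => (n : ℝ)) e
        push_cast at this
        linarith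
      have haux : 0 ≤ ε * ((j : ℝ) - 2 * (i : ℝ)) := by
        rw [← hm]; exact mul_nonneg hε (Nat.cast_nonneg _)
      rw [hkc]
      nlinarith [hpad', hs, hm, haux]
  have hkR : (0 : ℝ) < (k : ℝ) := by exact_mod_cast hkpos
  have hterm : 1 - ε < (ED (padSuffix (S.take i) k) (padSuffix (S.take j) k) : ℝ)
      / (2 * (k : ℝ)) := by
    rw [lt_div_iff₀ (by linarith : (0:ℝ) < 2 * (k : ℝ))]
    exact key
  exact lt_of_lt_of_le hterm (le_RSD (S.take i) (S.take j) ⟨k, hkpos⟩)
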